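/- In A = ℂ[x¹,x²,x³], fix ν, a ∈ ℝ, let L₁₂ := x¹·∂₂ − a·x²·∂₁ (a derivation of A), and define the star product α⋆β := Σ_{n≥0} ((−iν)ⁿ/n!)·∂₃ⁿ(α)·L₁₂ⁿ(β), a finite sum since ∂₃ is locally nilpotent on polynomials. Then: (i) x³⋆x¹ = x¹x³ + iν·a·x²; (ii) x³⋆x² = x²x³ − iν·x¹; (iii) x¹⋆x² = x²⋆x¹ = x¹x²; and (iv) for every c ∈ ℝ the polynomial f_c := (1/2)((x¹)² + a(x²)²) − c defining an elliptic cylinder is ⋆-central and undeformed: α⋆f_c = α·f_c = f_c⋆α for all α ∈ A. -/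

import Mathlib

open MvPolynomial
open scoped BigOperators

namespace EllipticCylinderStar

noncomputable def L12 (a : ℝ) :
    Derivation ℂ (MvPolynomial (Fin 3) ℂ) (MvPolynomial (Fin 3) ℂ) :=
  (X 0 : MvPolynomial (Fin 3) ℂ) • pderiv 1
    - ((C (a : ℂ) * X 1 : MvPolynomial (Fin 3) ℂ)) • pderiv 0

noncomputable def star (ν a : ℝ) (α β : MvPolynomial (Fin 3) ℂ) :
    MvPolynomial (Fin 3) ℂ :=
  ∑ᶠ n : ℕ, (((-(Complex.I * ν)) ^ n / n.factorial : ℂ)) •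
    (((pderiv 2 : Derivation ℂ (MvPolynomial (Fin 3) ℂ)
        (MvPolynomial (Fin 3) ℂ)).toLinearMap ^ n) α *
      ((L12 a).toLinearMap ^ n) β)

noncomputable def fc (a c : ℝ) : MvPolynomial (Fin 3) ℂ :=
  C (1 / 2 : ℂ) * ((X 0) ^ 2 + C (a : ℂ) * (X 1) ^ 2) - C (c : ℂ)

end EllipticCylinderStar

section helpers
open EllipticCylinderStar

lemma finsum_nat_two {M : Type*} [AddCommMonoid M] (f : ℕ → M)
    (h : ∀ n, 2 ≤ n → f n = 0) : ∑ᶠ n, f n = f 0 + f 1 := by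
  have hs : Function.support f ⊆ (({0, 1} : Finset ℕ) : Set ℕ) := by
    intro n hn
    simp only [Finset.coe_insert, Finset.coe_singleton, Set.mem_insert_iff,
      Set.mem_singleton_iff]
    by_contra hc
    push_neg at hc
    exact hn (h n (by omega))
  rw [finsum_eq_finset_sum_of_support_subset f hs]
  simp

lemma pow_eq_zero_of_succ {M : Type*} [AddCommGroup M] [Module ℂ M]
    (P : M →ₗ[ℂ] M) (x : M) (hx : P x = 0) {n : ℕ} (hn : 1 ≤ n) :
    (P ^ n) x = 0 := by
  obtain ⟨k, rfl⟩ := Nat.exists_eq_add_of_le hn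
  rw [add_comm, pow_succ, Module.End.mul_apply, hx, map_zero]

lemma pL12_X0 (a : ℝ) : L12 a (X 0) = -(C (a : ℂ) * X 1) := by
  simp [L12, pderiv_X, Pi.single_apply]

lemma pL12_X1 (a : ℝ) : L12 a (X 1) = X 0 := by
  simp [L12, pderiv_X, Pi.single_apply]

lemma pL12_fc (a c : ℝ) : L12 a (fc a c) = 0 := by
  simp only [L12, fc, Derivation.sub_apply, Derivation.smul_apply, map_sub, map_add, map_mul,
    Derivation.leibniz, Derivation.leibniz_pow, pderiv_X, pderiv_C, Pi.single_apply]
  simp [Pi.single_apply]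
  ring

lemma p3_fc (a c : ℝ) :
    (pderiv 2 : Derivation ℂ (MvPolynomial (Fin 3) ℂ) (MvPolynomial (Fin 3) ℂ)) (fc a c) = 0 := by
  simp [fc, pderiv_X, Pi.single_apply]

lemma p3_X2 :
    (pderiv 2 : Derivation ℂ (MvPolynomial (Fin 3) ℂ) (MvPolynomial (Fin 3) ℂ)) (X 2) = 1 := by
  simp

end helpers

open EllipticCylinderStar in
/-- Star products of coordinates for the twisted elliptic cylinders:
(i) `x³⋆x¹ = x¹x³ + iν·a·x²`; (ii) `x³⋆x² = x²x³ − iν·x¹`;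
(iii) `x¹⋆x² = x²⋆x¹ = x¹x²`; and (iv) each `f_c` is ⋆-central and
undeformed. -/
theorem statement19 (ν a : ℝ) :
    (EllipticCylinderStar.star ν a (X 2) (X 0)
        = X 0 * X 2 + C (Complex.I * ν * a) * X 1) ∧
    (EllipticCylinderStar.star ν a (X 2) (X 1)
        = X 1 * X 2 - C (Complex.I * (ν : ℂ)) * X 0) ∧
    (EllipticCylinderStar.star ν a (X 0) (X 1) = X 0 * X 1 ∧
      EllipticCylinderStar.star ν a (X 1) (X 0) = X 0 * X 1) ∧
    (∀ c : ℝ, ∀ α : MvPolynomial (Fin 3) ℂ,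
      EllipticCylinderStar.star ν a α (fc a c) = α * fc a c ∧
      EllipticCylinderStar.star ν a (fc a c) α = fc a c * α) := by
  set P : MvPolynomial (Fin 3) ℂ →ₗ[ℂ] MvPolynomial (Fin 3) ℂ :=
    (pderiv 2 : Derivation ℂ (MvPolynomial (Fin 3) ℂ)
        (MvPolynomial (Fin 3) ℂ)).toLinearMap with hP
  have hP2 : ∀ n, 2 ≤ n → (P ^ n) (X 2) = 0 := by
    intro n hn
    obtain ⟨k, rfl⟩ := Nat.exists_eq_add_of_le hn
    rw [add_comm, pow_add, pow_two, Module.End.mul_apply, Module.End.mul_apply]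
    have : P (X 2) = 1 := p3_X2
    rw [this]
    have : P (1 : MvPolynomial (Fin 3) ℂ) = 0 := by simp [hP]
    rw [this, map_zero]
  have key2 : ∀ β : MvPolynomial (Fin 3) ℂ, star ν a (X 2) β
      = X 2 * β + (-(Complex.I * ν)) • ((L12 a) β) := by
    intro β
    rw [EllipticCylinderStar.star, finsum_nat_two]
    · simp
    · intro n hn
      rw [hP2 n hn]
      simp
  refine ⟨?_, ?_, ⟨?_, ?_⟩, ?_⟩
  · rw [key2, pL12_X0]
    simp only [smul_neg, MvPolynomial.smul_eq_C_mul, map_mul, map_neg]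
    ring
  · rw [key2, pL12_X1]
    simp only [MvPolynomial.smul_eq_C_mul, map_mul, map_neg]
    ring
  · rw [EllipticCylinderStar.star, finsum_nat_two]
    · have h0 : P (X 0) = 0 := by simp [hP, pderiv_X, Pi.single_apply]
      simp [h0]
    · intro n hn
      rw [pow_eq_zero_of_succ P (X 0) (by simp [hP, pderiv_X, Pi.single_apply]) (by omega)]
      simp
  · rw [EllipticCylinderStar.star, finsum_nat_two]
    · have h0 : P (X 1) = 0 := by simp [hP, pderiv_X, Pi.single_apply]
      simp [h0, pL12_X1]
      ring
    · intro n hn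
      rw [pow_eq_zero_of_succ P (X 1) (by simp [hP, pderiv_X, Pi.single_apply]) (by omega)]
      simp
  · intro c α
    constructor
    · rw [EllipticCylinderStar.star, finsum_nat_two]
      · have h1 : (L12 a).toLinearMap (fc a c) = 0 := pL12_fc a c
        simp [h1]
      · intro n hn
        rw [pow_eq_zero_of_succ (L12 a).toLinearMap (fc a c) (pL12_fc a c) (by omega)]
        simp
    · rw [EllipticCylinderStar.star, finsum_nat_two]
      · have h1 : P (fc a c) = 0 := p3_fc a c
        simp [h1, p3_fc a c]
      · intro n hn
        rw [pow_eq_zero_of_succ P (fc a c) (p3_fc a c) (by omega)]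
        simp
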